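/- Suppose 𝐓 is a Kurepa tree and cov(M) > |B(𝐓)|, i.e., the real line cannot be covered by |B(𝐓)|-many meager sets. Then ◇(𝐓) holds. -/

import Mathlib

noncomputable section

open Cardinal Set

/-- The first uncountable ordinal `ω₁`. -/
def omega1 : Ordinal := (Cardinal.aleph 1).ord

/-- A transfinite binary sequence: a function `t : α → 2` for some ordinal `α`. -/
abbrev BinSeq : Type 1 := Σ α : Ordinal, (Set.Iio α → Bool)

namespace BinSeq

/-- The restriction `t ↾ β` of a binary sequence `t` to an initial segment of its domain. -/
def restrict (t : BinSeq) (β : Ordinal) (h : β ≤ t.1) : BinSeq :=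
  ⟨β, fun x => t.2 ⟨x.1, lt_of_lt_of_le x.2 h⟩⟩

/-- `s.sub t`: `s` is an initial segment of `t` (that is, `s ⊆ t`). -/
def sub (s t : BinSeq) : Prop := ∃ h : s.1 ≤ t.1, t.restrict s.1 h = s

/-- `s.ssub t`: `s` is a proper initial segment of `t` (that is, `s ⊊ t`). -/
def ssub (s t : BinSeq) : Prop := ∃ h : s.1 < t.1, t.restrict s.1 h.le = s

end BinSeq

/-- A candidate branch: a function `f : ω₁ → 2`. -/
abbrev BinBranch : Type 1 := Set.Iio omega1 → Bool

/-- The restriction `f ↾ α` of `f : ω₁ → 2` to an ordinal `α < ω₁`. -/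
def BinBranch.restrict (f : BinBranch) (α : Ordinal) (h : α < omega1) : BinSeq :=
  ⟨α, fun x => f ⟨x.1, lt_trans x.2 h⟩⟩

/-- `C` is a closed unbounded (club) subset of `ω₁`: it is a set of countable ordinals,
unbounded in `ω₁`, and closed under suprema of bounded nonempty subsets. -/
def IsClubBelow (C : Set Ordinal) : Prop :=
  C ⊆ Set.Iio omega1 ∧
  (∀ β < omega1, ∃ α ∈ C, β < α) ∧
  (∀ s : Set Ordinal, s ⊆ C → s.Nonempty → sSup s < omega1 → sSup s ∈ C)

/-- `S` is a stationary subset of `ω₁`: it meets every club subset of `ω₁`. -/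
def IsStationaryBelow (S : Set Ordinal) : Prop :=
  ∀ C : Set Ordinal, IsClubBelow C → (S ∩ C).Nonempty

/-- `T` is a binary ℵ₁-tree: a downward closed family of binary sequences of
countable length, all of whose levels are countable. -/
structure IsBinaryAleph1Tree (T : Set BinSeq) : Prop where
  dom_lt : ∀ t ∈ T, t.1 < omega1
  downward_closed : ∀ t ∈ T, ∀ β, ∀ h : β ≤ t.1, t.restrict β h ∈ T
  countable_levels : ∀ α < omega1, {t | t ∈ T ∧ t.1 = α}.Countable

/-- The set of cofinal branches of a binary tree:
functions `f : ω₁ → 2` all of whose initial segments lie in `T`. -/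
def BinBranches (T : Set BinSeq) : Set BinBranch :=
  {f | ∀ α, ∀ h : α < omega1, f.restrict α h ∈ T}

/-- A binary Kurepa tree: a binary ℵ₁-tree with at least ℵ₂-many cofinal branches. -/
def IsBinaryKurepa (T : Set BinSeq) : Prop :=
  IsBinaryAleph1Tree T ∧ Cardinal.aleph 2 ≤ #(↥(BinBranches T))

/-- `◇(T)` for a binary tree `T`: there is a transversal `⟨t_α | α < ω₁⟩` with `t_α ∈ T_α`
such that for every cofinal branch `f` of `T`, the set `{α < ω₁ | f ↾ α = t_α}` is stationary. -/
def BinDiamond (T : Set BinSeq) : Prop :=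
  ∃ t : Ordinal → BinSeq,
    (∀ α < omega1, t α ∈ T ∧ (t α).1 = α) ∧
    ∀ f ∈ BinBranches T,
      IsStationaryBelow {α | ∃ h : α < omega1, BinBranch.restrict f α h = t α}

/-- An abstract tree: a strict partial order in which the set of predecessors
of every point is well-ordered. -/
structure OTree where
  carrier : Type
  lt : carrier → carrier → Prop
  lt_trans : ∀ {x y z}, lt x y → lt y z → lt x z
  lt_irrefl : ∀ x, ¬ lt x x
  pred_wellOrder : ∀ x, IsWellOrder {y // lt y x} fun a b => lt a.1 b.1

namespace OTree

/-- The height of a node: the order type of its set of predecessors. -/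
def height (t : OTree) (x : t.carrier) : Ordinal :=
  @Ordinal.type {y // t.lt y x} (fun a b => t.lt a.1 b.1) (t.pred_wellOrder x)

/-- The `α`-th level of the tree. -/
def level (t : OTree) (α : Ordinal) : Set t.carrier := {x | t.height x = α}

/-- An ℵ₁-tree: a tree of height `ω₁` all of whose levels are countable. -/
def IsAleph1Tree (t : OTree) : Prop :=
  (∀ x, t.height x < omega1) ∧
  (∀ α < omega1, (t.level α).Nonempty) ∧
  (∀ α < omega1, (t.level α).Countable)

/-- A tree is Hausdorff if nodes of the same limit height
with the same predecessors are equal. -/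
def Hausdorff (t : OTree) : Prop :=
  ∀ x y : t.carrier, Order.IsSuccLimit (t.height x) → t.height x = t.height y →
    {z | t.lt z x} = {z | t.lt z y} → x = y

/-- The set of cofinal branches: uncountable maximal chains. -/
def branches (t : OTree) : Set (Set t.carrier) :=
  {C | IsMaxChain t.lt C ∧ ¬ C.Countable}

/-- A Kurepa tree: an ℵ₁-tree with at least ℵ₂-many cofinal branches. -/
def IsKurepa (t : OTree) : Prop :=
  t.IsAleph1Tree ∧ Cardinal.aleph 2 ≤ #(↥t.branches)

/-- `◇(𝐓)`: there is a transversal `⟨b_α | α < ω₁⟩` with `b_α ∈ T_α` such that for every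
cofinal branch `f`, the set `{α < ω₁ | f ↾ α = b_α}` (i.e. the set of `α < ω₁` such that
`b_α` is the unique element of `f` on the `α`-th level) is stationary. -/
def Diamond (t : OTree) : Prop :=
  ∃ b : Ordinal → t.carrier,
    (∀ α < omega1, b α ∈ t.level α) ∧
    ∀ f ∈ t.branches,
      IsStationaryBelow {α | α < omega1 ∧ f ∩ t.level α = {b α}}

/-- A tree has height `ω₁` if every node has countable height
and every countable level is nonempty. -/
def HasHeightOmega1 (t : OTree) : Prop :=
  (∀ x, t.height x < omega1) ∧ ∀ α < omega1, (t.level α).Nonempty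

end OTree


section Aux

theorem omega1_isLimit : Order.IsSuccLimit omega1 := Cardinal.isSuccLimit_ord (Cardinal.aleph0_le_aleph 1)

theorem omega1_pos : 0 < omega1 := omega1_isLimit.pos

theorem card_lt_of_lt_omega1 {β : Ordinal.{0}} (h : β < omega1) : β.card ≤ ℵ₀ := by
  have := Cardinal.lt_ord.mp h
  rwa [← Cardinal.succ_aleph0, Order.lt_succ_iff] at this

theorem countable_Iio {β : Ordinal.{0}} (h : β < omega1) : (Set.Iio β).Countable := by
  rw [← Cardinal.le_aleph0_iff_set_countable, Ordinal.mk_Iio_ordinal]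
  simpa using Cardinal.lift_le.mpr (card_lt_of_lt_omega1 h)

theorem sSup_lt_omega1 {s : Set Ordinal.{0}} (hs : s.Countable) (hsub : s ⊆ Set.Iio omega1) :
    sSup s < omega1 := by
  rcases s.eq_empty_or_nonempty with rfl | hne
  · simpa [csSup_empty] using omega1_pos
  · obtain ⟨f, rfl⟩ := hs.exists_eq_range hne
    rw [sSup_range]
    show iSup f < (Cardinal.aleph 1).ord
    apply Ordinal.iSup_lt_ord
    · rw [Cardinal.isRegular_aleph_one.cof_eq, Cardinal.mk_nat]
      exact Cardinal.aleph0_lt_aleph_one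
    · intro n; exact hsub (Set.mem_range_self n)

/-- auxiliary increasing sequence through given clubs -/
def clubSeq (C : ℕ → Set Ordinal.{0}) (h : ∀ n, IsClubBelow (C n))
    (start : {o : Ordinal.{0} // o < omega1}) : ℕ → {o : Ordinal.{0} // o < omega1}
  | 0 => start
  | (j+1) =>
    ⟨Classical.choose ((h (Nat.unpair j).1).2.1 (clubSeq C h start j).1 (clubSeq C h start j).2),
     (h (Nat.unpair j).1).1 (Classical.choose_spec
        ((h (Nat.unpair j).1).2.1 (clubSeq C h start j).1 (clubSeq C h start j).2)).1⟩

theorem clubSeq_mem (C : ℕ → Set Ordinal.{0}) (h : ∀ n, IsClubBelow (C n))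
    (start) (j : ℕ) : (clubSeq C h start (j+1)).1 ∈ C (Nat.unpair j).1 :=
  (Classical.choose_spec ((h (Nat.unpair j).1).2.1 (clubSeq C h start j).1 (clubSeq C h start j).2)).1

theorem clubSeq_lt (C : ℕ → Set Ordinal.{0}) (h : ∀ n, IsClubBelow (C n))
    (start) (j : ℕ) : (clubSeq C h start j).1 < (clubSeq C h start (j+1)).1 :=
  (Classical.choose_spec ((h (Nat.unpair j).1).2.1 (clubSeq C h start j).1 (clubSeq C h start j).2)).2

theorem isClubBelow_iInter {C : ℕ → Set Ordinal.{0}} (h : ∀ n, IsClubBelow (C n)) :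
    IsClubBelow (⋂ n, C n) := by
  refine ⟨fun x hx => (h 0).1 (Set.mem_iInter.mp hx 0), ?_, ?_⟩
  · intro β hβ
    obtain ⟨δ0, hδ0C, hδ0⟩ := (h 0).2.1 β hβ
    have hδ0lt : δ0 < omega1 := (h 0).1 hδ0C
    set x := clubSeq C h ⟨δ0, hδ0lt⟩ with hxdef
    have hmono : StrictMono (fun j => (x j).1) :=
      strictMono_nat_of_lt_succ (fun j => clubSeq_lt C h _ j)
    set σ := sSup (Set.range fun j => (x j).1) with hσ
    have hσlt : σ < omega1 := sSup_lt_omega1 (Set.countable_range _) (by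
      rintro _ ⟨j, rfl⟩; exact (x j).2)
    have hbdd : BddAbove (Set.range fun j => (x j).1) := Ordinal.bddAbove_of_small
    have hble : ∀ j, (x j).1 ≤ σ := fun j => le_csSup hbdd ⟨j, rfl⟩
    refine ⟨σ, ?_, lt_of_lt_of_le hδ0 (hble 0)⟩
    rw [Set.mem_iInter]
    intro n
    set s : Set Ordinal := (fun j => (x (j+1)).1) '' {j | (Nat.unpair j).1 = n} with hs
    have hssub : s ⊆ C n := by
      rintro o ⟨j, hj, rfl⟩
      rw [← hj]; exact clubSeq_mem C h _ j
    have hsne : s.Nonempty :=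
      ⟨(x (Nat.pair n 0 + 1)).1, Nat.pair n 0, by simp [Nat.unpair_pair], rfl⟩
    have hsbdd : BddAbove s := ⟨σ, by rintro o ⟨j, _, rfl⟩; exact hble (j+1)⟩
    have hsup : sSup s = σ := by
      apply le_antisymm
      · exact csSup_le hsne (by rintro o ⟨j, _, rfl⟩; exact hble (j+1))
      · apply csSup_le ⟨_, Set.mem_range_self 0⟩
        rintro o ⟨i, rfl⟩
        have hkey : (x i).1 ≤ (x (Nat.pair n i + 1)).1 :=
          hmono.monotone (Nat.le_succ_of_le (Nat.right_le_pair n i))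
        exact le_trans hkey (le_csSup hsbdd ⟨Nat.pair n i, by simp [Nat.unpair_pair], rfl⟩)
    have := (h n).2.2 s hssub hsne (hsup ▸ hσlt)
    rwa [hsup] at this
  · intro s hsub hne hlt
    rw [Set.mem_iInter]; intro n
    exact (h n).2.2 s (fun x hx => Set.mem_iInter.mp (hsub hx) n) hne hlt

/-- countable union of nonstationary sets is nonstationary (pigeonhole form) -/
theorem exists_stationary_of_iUnion {S : Set Ordinal.{0}} {T : ℕ → Set Ordinal.{0}}
    (hS : IsStationaryBelow S) (hsub : S ⊆ ⋃ n, T n) :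
    ∃ n, IsStationaryBelow (S ∩ T n) := by
  by_contra hcon
  push_neg at hcon
  simp only [IsStationaryBelow, not_forall] at hcon
  choose Cfun hC hdisj using fun n => hcon n
  have hclub : IsClubBelow (⋂ n, Cfun n) := isClubBelow_iInter hC
  obtain ⟨α, hαS, hαC⟩ := hS _ hclub
  obtain ⟨_, ⟨n, rfl⟩, hαT⟩ := hsub hαS
  exact hdisj n ⟨α, ⟨hαS, hαT⟩, Set.mem_iInter.mp hαC n⟩

theorem IsStationaryBelow.mono {S S' : Set Ordinal.{0}} (h : IsStationaryBelow S) (hsub : S ⊆ S') :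
    IsStationaryBelow S' := fun C hC => (h C hC).imp (fun x hx => ⟨hsub hx.1, hx.2⟩)

theorem IsStationaryBelow.subset_omega1 {S : Set Ordinal.{0}} (h : IsStationaryBelow S) : True := trivial

theorem isStationaryBelow_Ioo {α : Ordinal.{0}} (hα : α < omega1) :
    IsStationaryBelow (Set.Ioo α omega1) := by
  intro C hC
  obtain ⟨β, hβC, hβ⟩ := hC.2.1 α hα
  exact ⟨β, ⟨hβ, hC.1 hβC⟩, hβC⟩

theorem isClubBelow_Ioo {α : Ordinal.{0}} (hα : α < omega1) : IsClubBelow (Set.Ioo α omega1) := by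
  refine ⟨fun x hx => hx.2, ?_, ?_⟩
  · intro β hβ
    refine ⟨Order.succ (max α β), ⟨?_, omega1_isLimit.succ_lt (max_lt hα hβ)⟩, ?_⟩
    · exact lt_of_le_of_lt (le_max_left α β) (Order.lt_succ _)
    · exact lt_of_le_of_lt (le_max_right α β) (Order.lt_succ _)
  · intro s hsub hne hlt
    obtain ⟨o, ho⟩ := hne
    have hbdd : BddAbove s := ⟨omega1, fun x hx => (hsub hx).2.le⟩
    exact ⟨lt_of_lt_of_le (hsub ho).1 (le_csSup hbdd ho), hlt⟩

/-- Existence of countably many pairwise disjoint stationary subsets of ω₁ (Ulam). -/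
theorem exists_disjoint_stationary :
    ∃ S : ℕ → Set Ordinal.{0},
      (∀ k, S k ⊆ Set.Iio omega1) ∧ (∀ k, IsStationaryBelow (S k)) ∧
      (∀ k k', k ≠ k' → Disjoint (S k) (S k')) := by
  -- injections from Iio β to ℕ
  have hinj : ∀ β : Ordinal.{0}, β < omega1 → ∃ g : Ordinal.{0} → ℕ, Set.InjOn g (Set.Iio β) :=
    fun β hβ => Set.countable_iff_exists_injOn.mp (countable_Iio hβ)
  classical
  choose! I hI using hinj
  set A : ℕ → Ordinal.{0} → Set Ordinal.{0} :=
    fun n α => {β | α < β ∧ β < omega1 ∧ I β α = n} with hA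
  have hstat : ∀ α : Ordinal.{0}, α < omega1 → ∃ n, IsStationaryBelow (A n α) := by
    intro α hα
    have hcover : Set.Ioo α omega1 ⊆ ⋃ n, A n α := by
      intro β hβ
      exact Set.mem_iUnion.mpr ⟨I β α, hβ.1, hβ.2, rfl⟩
    obtain ⟨n, hn⟩ := exists_stationary_of_iUnion (isStationaryBelow_Ioo hα) hcover
    exact ⟨n, hn.mono (Set.inter_subset_right)⟩
  choose! nfun hnfun using hstat
  -- pigeonhole: some value n₀ is attained for infinitely many α
  have hfib : ∃ n₀ : ℕ, ({α | α < omega1 ∧ nfun α = n₀}).Infinite := by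
    by_contra hcon
    push_neg at hcon
    have : (Set.Iio omega1).Countable := by
      have : Set.Iio omega1 ⊆ ⋃ n₀ : ℕ, {α | α < omega1 ∧ nfun α = n₀} := by
        intro α hα; exact Set.mem_iUnion.mpr ⟨nfun α, hα, rfl⟩
      exact Set.Countable.mono this
        (Set.countable_iUnion fun n₀ => (hcon n₀).countable)
    rw [← Cardinal.le_aleph0_iff_set_countable, Ordinal.mk_Iio_ordinal] at this
    simp only [omega1, Cardinal.card_ord] at this
    rw [show (ℵ₀ : Cardinal.{1}) = Cardinal.lift.{1} (ℵ₀ : Cardinal.{0}) by simp] at this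
    exact absurd (Cardinal.lift_le.mp this) (not_le.mpr Cardinal.aleph0_lt_aleph_one)
  obtain ⟨n₀, hinf⟩ := hfib
  have af := hinf.natEmbedding
  refine ⟨fun k => A n₀ (af k).1, ?_, ?_, ?_⟩
  · intro k β hβ; exact hβ.2.1
  · intro k
    have h2 := (af k).2
    have := hnfun (af k).1 h2.1
    rwa [h2.2] at this
  · intro k k' hkk'
    rw [Set.disjoint_left]
    rintro β ⟨h1, h2, h3⟩ ⟨h1', h2', h3'⟩
    have : (af k).1 = (af k').1 := hI β h2 h1 h1' (h3.trans h3'.symm)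
    exact hkk' (af.injective (Subtype.ext this))

/-- the `n`-th binary digit of `x` -/
def rbit (x : ℝ) (n : ℕ) : ℤ := ⌊x * 2^(n+1)⌋ % 2

/-- the `k`-th coordinate of `x` under our coding -/
def rcoord (x : ℝ) (k : ℕ) : ℕ := sInf {j | rbit x (Nat.pair k j) = 1}

theorem floor_eq_of_dyadic {i : ℤ} {P n : ℕ} (hn : n < P) {x : ℝ}
    (hx : x ∈ Set.Ico ((i:ℝ)/2^P) ((i+1:ℝ)/2^P)) :
    ⌊x * 2^(n+1)⌋ = i / 2^(P-n-1) := by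
  have hPd : P = (n+1) + (P-n-1) := by omega
  set d := P - n - 1 with hd
  set q := i / (2:ℤ)^d with hq
  have hD : (0:ℤ) < 2^d := by positivity
  have hDR : (0:ℝ) < 2^d := by positivity
  have h2P : (2:ℝ)^P = 2^(n+1) * 2^d := by rw [hPd, pow_add]
  have key : ∀ y : ℝ, y/2^P * 2^(n+1) = y/2^d := by
    intro y; rw [h2P]; field_simp
  obtain ⟨hx1, hx2⟩ := hx
  have hlow' : (q * 2^d : ℤ) ≤ i := Int.ediv_mul_le i (show (2:ℤ)^d ≠ 0 by positivity)
  have hlow : (q : ℝ) * 2^d ≤ (i:ℝ) := by exact_mod_cast hlow'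

  have hhigh : ((i:ℝ)+1) ≤ ((q:ℝ)+1) * 2^d := by
    have h := Int.lt_ediv_add_one_mul_self i hD
    have : (i:ℤ) + 1 ≤ (q + 1) * 2^d := h
    exact_mod_cast this
  rw [Int.floor_eq_iff]
  constructor
  · have h2 : (i:ℝ)/2^d ≤ x * 2^(n+1) := by
      have := mul_le_mul_of_nonneg_right hx1 (show (0:ℝ) ≤ 2^(n+1) by positivity)
      rwa [key] at this
    have h1 : (q:ℝ) ≤ (i:ℝ)/2^d := (le_div_iff₀ hDR).mpr hlow
    exact le_trans h1 h2
  · have h2 : x * 2^(n+1) < ((i:ℝ)+1)/2^d := by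
      have := mul_lt_mul_of_pos_right hx2 (show (0:ℝ) < 2^(n+1) by positivity)
      rwa [key] at this
    have h1 : ((i:ℝ)+1)/2^d ≤ (q:ℝ)+1 := (div_le_iff₀ hDR).mpr hhigh
    exact lt_of_lt_of_le h2 h1

theorem rbit_eq_of_dyadic {i : ℤ} {P n : ℕ} (hn : n < P) {x : ℝ}
    (hx : x ∈ Set.Ico ((i:ℝ)/2^P) ((i+1:ℝ)/2^P)) :
    rbit x n = (i / 2^(P-n-1)) % 2 := by
  rw [rbit, floor_eq_of_dyadic hn hx]

/-- key construction: inside any dyadic interval of level `Q` we can find an open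
set on which `rcoord · k = m`, provided `Q ≤ k`. -/
theorem exists_open_coord (Q : ℕ) (j : ℤ) (k m : ℕ) (hQk : Q ≤ k) :
    ∃ V : Set ℝ, IsOpen V ∧ V.Nonempty ∧ V ⊆ Set.Ico ((j:ℝ)/2^Q) ((j+1:ℝ)/2^Q) ∧
      ∀ x ∈ V, rcoord x k = m := by
  set P := Nat.pair k m + 1 with hP
  have hQP : Q < P := lt_of_le_of_lt hQk (Nat.lt_succ_of_le (Nat.left_le_pair k m))
  set i : ℤ := j * 2^(P-Q) + 1 with hi
  have hPQ1 : 1 ≤ P - Q := by omega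
  have hsub : Set.Ico ((i:ℝ)/2^P) ((i+1:ℝ)/2^P) ⊆ Set.Ico ((j:ℝ)/2^Q) ((j+1:ℝ)/2^Q) := by
    have hPow : (2:ℝ)^P = 2^Q * 2^(P-Q) := by rw [← pow_add]; congr 1; omega
    have h2PQ : (2:ℝ)^(P-Q) ≥ 2 := by
      calc (2:ℝ)^(P-Q) ≥ 2^1 := by
            apply pow_le_pow_right₀ (by norm_num) hPQ1
        _ = 2 := pow_one 2
    intro x hx
    constructor
    · calc (j:ℝ)/2^Q ≤ (i:ℝ)/2^P := by
            rw [div_le_div_iff₀ (by positivity) (by positivity)]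
            rw [hPow, hi]
            push_cast
            nlinarith [pow_pos (show (0:ℝ) < 2 by norm_num) Q, pow_pos (show (0:ℝ) < 2 by norm_num) (P-Q)]
        _ ≤ x := hx.1
    · calc x < (i+1:ℝ)/2^P := hx.2
        _ ≤ (j+1:ℝ)/2^Q := by
            rw [div_le_div_iff₀ (by positivity) (by positivity)]
            rw [hPow, hi]
            push_cast
            nlinarith [pow_pos (show (0:ℝ) < 2 by norm_num) Q, pow_pos (show (0:ℝ) < 2 by norm_num) (P-Q)]
  refine ⟨Set.Ioo ((i:ℝ)/2^P) ((i+1:ℝ)/2^P), isOpen_Ioo, ?_, ?_, ?_⟩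
  · rw [Set.nonempty_Ioo]
    have hp : (0:ℝ) < 2^P := by positivity
    rw [div_lt_div_iff_of_pos_right hp]
    linarith
  · exact fun x hx => hsub (Set.mem_Ico.mpr ⟨hx.1.le, hx.2⟩)
  · intro x hx
    have hxIco : x ∈ Set.Ico ((i:ℝ)/2^P) ((i+1:ℝ)/2^P) := ⟨hx.1.le, hx.2⟩
    -- digits of x at positions pair k j' for j' ≤ m
    have hdig : ∀ j' : ℕ, j' ≤ m → rbit x (Nat.pair k j') = if j' = m then 1 else 0 := by
      intro j' hj'
      have hnP : Nat.pair k j' < P := by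
        rcases lt_or_eq_of_le hj' with h | h
        · exact Nat.lt_succ_of_lt (Nat.pair_lt_pair_right k h)
        · rw [h]; exact Nat.lt_succ_self _
      rw [rbit_eq_of_dyadic hnP hxIco]
      rcases eq_or_lt_of_le hj' with rfl | hlt
      · -- position P-1, lowest bit of i
        simp only [if_pos rfl]
        have : P - Nat.pair k j' - 1 = 0 := by omega
        rw [this, pow_zero, Int.ediv_one, hi]
        have h2 : j * 2^(P-Q) = (j * 2^(P-Q-1)) * 2 := by
          rw [mul_assoc, ← pow_succ]; congr 2; omega
        rw [h2, add_comm, Int.add_mul_emod_self_right]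
        decide
      · -- lower positions: digit 0
        rw [if_neg (Nat.ne_of_lt hlt)]
        set n := Nat.pair k j' with hn
        have hQn : Q ≤ n := le_trans hQk (Nat.left_le_pair k j')
        have hnP1 : n < P - 1 := by
          have := Nat.pair_lt_pair_right k hlt
          omega
        set e := P - n - 1 with he
        have he1 : 1 ≤ e := by omega
        have hePQ : e + 1 ≤ P - Q := by omega
        have hsplit : i = 1 + (j * 2^(P-Q-e)) * 2^e := by
          rw [hi, mul_assoc, ← pow_add]
          have : P - Q - e + e = P - Q := by omega
          rw [this]; ring
        rw [hsplit]
        have h20 : (0:ℤ) < 2^e := by positivity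
        rw [Int.add_mul_ediv_right _ _ (by positivity : (2:ℤ)^e ≠ 0)]
        have hone : (1:ℤ) / 2^e = 0 := by
          apply Int.ediv_eq_zero_of_lt (by norm_num)
          calc (1:ℤ) < 2^1 := by norm_num
            _ ≤ 2^e := pow_le_pow_right₀ (by norm_num) he1
        rw [hone, zero_add]
        have h3 : (2:ℤ)^(P-Q-e) = 2^(P-Q-e-1) * 2 := by
          rw [← pow_succ]; congr 1; omega
        rw [h3, ← mul_assoc, Int.mul_emod_left]
    have hmem : m ∈ {j' | rbit x (Nat.pair k j') = 1} := by
      have := hdig m le_rfl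
      simpa using this
    have hle : rcoord x k ≤ m := Nat.sInf_le hmem
    have hsinf : rcoord x k ∈ {j' | rbit x (Nat.pair k j') = 1} := Nat.sInf_mem ⟨m, hmem⟩
    rcases lt_or_eq_of_le hle with h | h
    · exfalso
      have := hdig (rcoord x k) h.le
      rw [if_neg (Nat.ne_of_lt h)] at this
      rw [Set.mem_setOf_eq, this] at hsinf
      norm_num at hsinf
    · exact h

theorem exists_dyadic_subset {U : Set ℝ} (hU : IsOpen U) (hne : U.Nonempty) :
    ∃ (Q : ℕ) (j : ℤ), Set.Ico ((j:ℝ)/2^Q) ((j+1:ℝ)/2^Q) ⊆ U := by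
  obtain ⟨x, hx⟩ := hne
  obtain ⟨ε, hε, hball⟩ := Metric.isOpen_iff.mp hU x hx
  obtain ⟨Q, hQ⟩ := pow_unbounded_of_one_lt (1/ε) (one_lt_two (α := ℝ))
  refine ⟨Q, ⌊x * 2^Q⌋, ?_⟩
  have h2Q : (0:ℝ) < 2^Q := by positivity
  have hfl1 : ((⌊x * 2^Q⌋ : ℝ)) ≤ x * 2^Q := Int.floor_le _
  have hfl2 : x * 2^Q < (⌊x * 2^Q⌋ : ℝ) + 1 := Int.lt_floor_add_one _
  have hxI : (((⌊x * 2^Q⌋ : ℤ)):ℝ)/2^Q ≤ x ∧ x < ((⌊x * 2^Q⌋:ℝ)+1)/2^Q := by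
    constructor
    · rw [div_le_iff₀ h2Q]; exact hfl1
    · rw [lt_div_iff₀ h2Q]; exact hfl2
  intro y hy
  apply hball
  rw [Metric.mem_ball, Real.dist_eq, abs_lt]
  have hlen : (1:ℝ)/2^Q < ε := by
    rw [div_lt_iff₀ h2Q]
    calc (1:ℝ) = (1/ε) * ε := by field_simp
      _ < 2^Q * ε := by exact mul_lt_mul_of_pos_right hQ hε
      _ = ε * 2^Q := by ring
  obtain ⟨hy1, hy2⟩ := hy
  constructor
  · have : y - x > -(1/2^Q) := by
      have h1 : y ≥ ((⌊x * 2^Q⌋:ℝ))/2^Q := hy1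
      have h2 : x < ((⌊x * 2^Q⌋:ℝ)+1)/2^Q := hxI.2
      have : ((⌊x * 2^Q⌋:ℝ)+1)/2^Q - ((⌊x * 2^Q⌋:ℝ))/2^Q = 1/2^Q := by field_simp; ring
      linarith
    linarith
  · have h1 : y < ((⌊x * 2^Q⌋:ℝ)+1)/2^Q := hy2
    have h2 : x ≥ ((⌊x * 2^Q⌋:ℝ))/2^Q := hxI.1
    have : ((⌊x * 2^Q⌋:ℝ)+1)/2^Q - ((⌊x * 2^Q⌋:ℝ))/2^Q = 1/2^Q := by field_simp; ring
    linarith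

theorem isMeagre_allCoord (E : ℕ → Set ℕ) (hE : ∀ k, ∃ m, m ∉ E k) :
    IsMeagre {x : ℝ | ∀ k, rcoord x k ∈ E k} := by
  set A := {x : ℝ | ∀ k, rcoord x k ∈ E k} with hA
  have hnd : IsNowhereDense (closure A) := by
    rw [IsNowhereDense, closure_closure, Set.eq_empty_iff_forall_notMem]
    intro y hy
    set U := interior (closure A) with hU
    have hUopen : IsOpen U := isOpen_interior
    obtain ⟨Q, j, hQj⟩ := exists_dyadic_subset hUopen ⟨y, hy⟩
    obtain ⟨m, hm⟩ := hE Q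
    obtain ⟨V, hVopen, hVne, hVsub, hVcoord⟩ := exists_open_coord Q j Q m le_rfl
    obtain ⟨z, hz⟩ := hVne
    have hzU : z ∈ closure A := interior_subset (hQj (hVsub hz))
    obtain ⟨w, hwV, hwA⟩ := _root_.mem_closure_iff.mp hzU V hVopen hz
    have h1 : rcoord w Q = m := hVcoord w hwV
    have h2 : rcoord w Q ∈ E Q := hwA Q
    rw [h1] at h2
    exact hm h2
  rw [isMeagre_iff_countable_union_isNowhereDense]
  exact ⟨{closure A}, by rintro t rfl; exact hnd, Set.countable_singleton _,
    by rw [Set.sUnion_singleton]; exact subset_closure⟩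

namespace OTree
variable (t : OTree)

theorem height_eq_typein {z x : t.carrier} (h : t.lt z x) :
    t.height z = @Ordinal.typein {y // t.lt y x} (fun a b => t.lt a.1 b.1) (t.pred_wellOrder x)
      ⟨z, h⟩ := by
  letI := t.pred_wellOrder x
  letI := t.pred_wellOrder z
  rw [← Ordinal.type_subrel]
  apply RelIso.ordinal_type_eq
  exact {
    toFun := fun c => ⟨⟨c.1, t.lt_trans c.2 h⟩, c.2⟩
    invFun := fun b => ⟨b.1.1, b.2⟩
    left_inv := fun c => rfl
    right_inv := fun b => rfl
    map_rel_iff' := Iff.rfl }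

theorem height_lt_of_lt {z x : t.carrier} (h : t.lt z x) : t.height z < t.height x := by
  letI := t.pred_wellOrder x
  rw [height_eq_typein t h]
  exact Ordinal.typein_lt_type _ _

theorem exists_below {x : t.carrier} {α : Ordinal} (hα : α < t.height x) :
    ∃ z : t.carrier, t.lt z x ∧ t.height z = α := by
  letI := t.pred_wellOrder x
  set z := Ordinal.enum (fun a b : {y // t.lt y x} => t.lt a.1 b.1) ⟨α, hα⟩ with hz
  exact ⟨z.1, z.2, by rw [height_eq_typein t z.2]; simpa [hz] using
    Ordinal.typein_enum (fun a b : {y // t.lt y x} => t.lt a.1 b.1) hα⟩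


theorem chain_height_inj {f : Set t.carrier} (hf : IsChain t.lt f) {x y : t.carrier}
    (hx : x ∈ f) (hy : y ∈ f) (hxy : t.height x = t.height y) : x = y := by
  by_contra hne
  rcases hf hx hy hne with h | h
  · exact absurd hxy (ne_of_lt (t.height_lt_of_lt h))
  · exact absurd hxy.symm (ne_of_lt (t.height_lt_of_lt h))

theorem mem_branch_of_below {f : Set t.carrier} (hf : IsMaxChain t.lt f)
    {x z : t.carrier} (hx : x ∈ f) (hzx : t.lt z x) : z ∈ f := by
  rcases Classical.em (z ∈ f) with h | h
  · exact h
  have hchain : IsChain t.lt (insert z f) := by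
    apply hf.1.insert
    intro w hw hne
    -- w ∈ f; compare w with x
    rcases Classical.em (w = x) with rfl | hwx
    · exact Or.inl hzx
    rcases hf.1 hw hx hwx with hlt | hlt
    · -- w, z both predecessors of x: linear
      letI := t.pred_wellOrder x
      rcases trichotomous_of (fun a b : {y // t.lt y x} => t.lt a.1 b.1) ⟨z, hzx⟩ ⟨w, hlt⟩ with
        h1 | h1 | h1
      · exact Or.inl h1
      · exact absurd (congrArg Subtype.val h1) hne
      · exact Or.inr h1
    · exact Or.inl (t.lt_trans hzx hlt)
  have := hf.2 hchain (Set.subset_insert z f)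
  rw [this]
  exact Set.mem_insert z f

theorem branch_exists_unique_at (hT : t.IsAleph1Tree) {f : Set t.carrier}
    (hfb : f ∈ t.branches) {α : Ordinal} (hα : α < omega1) :
    ∃! z, z ∈ f ∩ t.level α := by
  obtain ⟨hmax, hunc⟩ := hfb
  -- existence of an element of height ≥ α
  have hex : ∃ x ∈ f, α ≤ t.height x := by
    by_contra hcon
    push_neg at hcon
    have hsub : f ⊆ ⋃ β ∈ Set.Iio α, t.level β := by
      intro x hx
      exact Set.mem_biUnion (hcon x hx) rfl
    exact hunc (Set.Countable.mono hsub (Set.Countable.biUnion (countable_Iio hα)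
      (fun β hβ => hT.2.2 β (_root_.lt_trans hβ hα))))
  obtain ⟨x, hxf, hxα⟩ := hex
  have hzex : ∃ z, z ∈ f ∩ t.level α := by
    rcases eq_or_lt_of_le hxα with heq | hlt
    · exact ⟨x, hxf, heq.symm⟩
    · obtain ⟨z, hzx, hz⟩ := t.exists_below hlt
      exact ⟨z, t.mem_branch_of_below hmax hxf hzx, hz⟩
  obtain ⟨z, hzf, hzα⟩ := hzex
  refine ⟨z, ⟨hzf, hzα⟩, ?_⟩
  rintro w ⟨hwf, hwα⟩
  exact t.chain_height_inj hmax.1 hwf hzf (by rw [hwα, hzα])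

end OTree


end Aux

/-- If `𝐓` is a Kurepa tree and `cov(M) > |B(𝐓)|`, i.e. the real line cannot be
covered by `|B(𝐓)|`-many meager sets, then `◇(𝐓)` holds. -/
theorem statement8 (t : OTree) (h1 : t.IsKurepa)
    (hcov : ∀ (ι : Type) (F : ι → Set ℝ), #ι ≤ #(↥t.branches) →
      (∀ i, IsMeagre (F i)) → (⋃ i, F i) ≠ Set.univ) :
    t.Diamond := by
  classical
  obtain ⟨hT, _hcard⟩ := h1
  -- carrier is nonempty
  obtain ⟨x0, _⟩ := hT.2.1 0 omega1_pos
  -- enumerations of levels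
  have hnode : ∀ α : Ordinal.{0}, α < omega1 → ∃ g : ℕ → t.carrier, t.level α = Set.range g :=
    fun α hα => (hT.2.2 α hα).exists_eq_range (hT.2.1 α hα)
  have _inst : Nonempty t.carrier := ⟨x0⟩
  choose! nodeAt hnodeAt using hnode
  -- canonical member of each branch at each level
  have hbrex : ∀ (f : ↥t.branches) (α : Ordinal.{0}), ∃ z : t.carrier,
      α < omega1 → z ∈ f.1 ∩ t.level α ∧ ∀ w ∈ f.1 ∩ t.level α, w = z := by
    intro f α
    by_cases hα : α < omega1
    · obtain ⟨z, hz1, hz2⟩ := OTree.branch_exists_unique_at t hT f.2 hα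
      exact ⟨z, fun _ => ⟨hz1, hz2⟩⟩
    · exact ⟨x0, fun h => absurd h hα⟩
  choose br hbr using hbrex
  -- disjoint stationary sets
  obtain ⟨S, hSsub, hSstat, hSdisj⟩ := exists_disjoint_stationary
  -- bad coordinates for each branch
  set Efun : ↥t.branches → ℕ → Set ℕ := fun f k =>
    {m | ¬ IsStationaryBelow {α | α ∈ S k ∧ nodeAt α m = br f α}} with hEfun
  have hE : ∀ (f : ↥t.branches) (k : ℕ), ∃ m, m ∉ Efun f k := by
    intro f k
    have hcover : S k ⊆ ⋃ m : ℕ, {α | α ∈ S k ∧ nodeAt α m = br f α} := by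
      intro α hα
      have hαlt : α < omega1 := hSsub k hα
      have hmem : br f α ∈ t.level α := ((hbr f α hαlt).1).2
      rw [hnodeAt α hαlt] at hmem
      obtain ⟨m, hm⟩ := hmem
      exact Set.mem_iUnion.mpr ⟨m, hα, hm⟩
    obtain ⟨m, hm⟩ := exists_stationary_of_iUnion (hSstat k) hcover
    refine ⟨m, ?_⟩
    intro hbad
    exact hbad (hm.mono (fun α hα => ⟨hα.1, hα.2.2⟩))
  -- the meager sets
  set F : ↥t.branches → Set ℝ := fun f => {x | ∀ k, rcoord x k ∈ Efun f k} with hF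
  have hFm : ∀ f, IsMeagre (F f) := fun f => isMeagre_allCoord (Efun f) (hE f)
  have hneq := hcov ↥t.branches F le_rfl hFm
  have hex : ∃ x : ℝ, x ∉ ⋃ f, F f := by
    by_contra hcon
    push_neg at hcon
    exact hneq (Set.eq_univ_of_forall hcon)
  obtain ⟨x, hx⟩ := hex
  -- the transversal
  set kOf : Ordinal.{0} → ℕ := fun α => if h : ∃ k, α ∈ S k then Classical.choose h else 0
    with hkOf
  set b : Ordinal.{0} → t.carrier := fun α => nodeAt α (rcoord x (kOf α)) with hb
  refine ⟨b, ?_, ?_⟩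
  · intro α hα
    rw [OTree.level, Set.mem_setOf_eq, show t.height (b α) = α from ?_]
    have : b α ∈ t.level α := by
      rw [hnodeAt α hα]; exact Set.mem_range_self _
    exact this
  · intro f hf
    set fb : ↥t.branches := ⟨f, hf⟩ with hfb
    have hxf : x ∉ F fb := fun hmem => hx (Set.mem_iUnion.mpr ⟨fb, hmem⟩)
    rw [hF, Set.mem_setOf_eq] at hxf
    push_neg at hxf
    obtain ⟨k, hk⟩ := hxf
    rw [hEfun, Set.mem_setOf_eq, not_not] at hk
    apply hk.mono
    intro α hα
    obtain ⟨hαS, hαeq⟩ := hα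
    have hαlt : α < omega1 := hSsub k hαS
    have hkOfα : kOf α = k := by
      have hex' : ∃ k', α ∈ S k' := ⟨k, hαS⟩
      have h1 : kOf α = Classical.choose hex' := by
        simp only [hkOf]
        rw [dif_pos hex']
      rw [h1]
      by_contra hne
      exact Set.disjoint_left.mp (hSdisj _ _ hne) (Classical.choose_spec hex') hαS
    have hbα : b α = br fb α := by rw [hb]; simp only; rw [hkOfα, hαeq]
    refine ⟨hαlt, ?_⟩
    rw [Set.eq_singleton_iff_unique_mem, hbα]
    exact ⟨(hbr fb α hαlt).1, fun w hw => (hbr fb α hαlt).2 w hw⟩
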